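/- Let ξ_k be the unique positive root of Φ_k(x) = 1 and set P(x) = x²(Φ_k(x) − Φ_{k-1}(x))²(Φ_k(x) − x). Then P(ξ_k) = ξ_k²(1 − √(1 − ξ_k))²(1 − ξ_k), and as k → ∞ this quantity converges to p = (3/64)(1 − √3/2)², which satisfies p > 1/1200. -/

import Mathlib

open Filter Real

/-- `Φ_0(x) = x`, `Φ_k(x) = x + Φ_{k-1}(x)²`. -/
def Phi : ℕ → ℝ → ℝ
  | 0, x => x
  | k + 1, x => x + (Phi k x) ^ 2

/-- `P(x) = x²(Φ_k(x) − Φ_{k-1}(x))²(Φ_k(x) − x)` for `k ≥ 1` (written with index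
`k+1`). -/
def Pval (k : ℕ) (x : ℝ) : ℝ :=
  x ^ 2 * (Phi (k + 1) x - Phi k x) ^ 2 * (Phi (k + 1) x - x)

lemma Phi_ge (k : ℕ) {x : ℝ} (hx : 0 ≤ x) : x ≤ Phi k x := by
  induction k with
  | zero => simp [Phi]
  | succ n ih => simpa [Phi] using sq_nonneg (Phi n x)

lemma Phi_nonneg (k : ℕ) {x : ℝ} (hx : 0 ≤ x) : 0 ≤ Phi k x :=
  hx.trans (Phi_ge k hx)

lemma Phi_mono (k : ℕ) {x y : ℝ} (hx : 0 ≤ x) (hxy : x ≤ y) : Phi k x ≤ Phi k y := by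
  induction k with
  | zero => simpa [Phi]
  | succ n ih =>
    simp only [Phi]
    exact add_le_add hxy (pow_le_pow_left₀ (Phi_nonneg n hx) ih 2)

lemma Phi_strict (k : ℕ) {x y : ℝ} (hx : 0 ≤ x) (hxy : x < y) : Phi k x < Phi k y := by
  induction k with
  | zero => simpa [Phi]
  | succ n ih =>
    simp only [Phi]
    have := pow_le_pow_left₀ (Phi_nonneg n hx) ih.le 2
    linarith

lemma Phi_mono_k (k : ℕ) {x : ℝ} (hx : 0 ≤ x) : Phi k x ≤ Phi (k + 1) x := by
  induction k with
  | zero => simpa [Phi] using sq_nonneg x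
  | succ n ih =>
    simp only [Phi]
    exact add_le_add le_rfl (pow_le_pow_left₀ (Phi_nonneg n hx) ih 2)

lemma Phi_quarter (k : ℕ) : Phi k (1/4 : ℝ) ≤ 1/2 := by
  induction k with
  | zero => norm_num [Phi]
  | succ n ih =>
    have h0 : (0:ℝ) ≤ Phi n (1/4) := Phi_nonneg n (by norm_num)
    simp only [Phi]
    nlinarith

/-- For `ξ_k` the unique positive root of `Φ_k(x) = 1`:
`P(ξ_k) = ξ_k²(1 − √(1 − ξ_k))²(1 − ξ_k)`, this quantity converges as `k → ∞` to
`p = (3/64)(1 − √3/2)²`, and `p > 1/1200`. -/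
theorem Pval_at_xi (ξ : ℕ → ℝ) (hpos : ∀ k, 0 < ξ k) (hroot : ∀ k, Phi k (ξ k) = 1) :
    (∀ k : ℕ, Pval k (ξ (k + 1))
        = (ξ (k + 1)) ^ 2 * (1 - Real.sqrt (1 - ξ (k + 1))) ^ 2 * (1 - ξ (k + 1))) ∧
      Tendsto (fun k => Pval k (ξ (k + 1))) atTop
        (nhds ((3 / 64) * (1 - Real.sqrt 3 / 2) ^ 2)) ∧
      (3 / 64 : ℝ) * (1 - Real.sqrt 3 / 2) ^ 2 > 1 / 1200 := by
  -- Phi k (ξ (k+1)) = sqrt (1 - ξ (k+1))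
  have hsq : ∀ k : ℕ, (Phi k (ξ (k+1)))^2 = 1 - ξ (k+1) := by
    intro k
    have h := hroot (k+1)
    simp only [Phi] at h
    linarith
  have hsqrt : ∀ k : ℕ, Phi k (ξ (k+1)) = Real.sqrt (1 - ξ (k+1)) := by
    intro k
    rw [← hsq k, Real.sqrt_sq (Phi_nonneg k (hpos (k+1)).le)]
  have hPval : ∀ k : ℕ, Pval k (ξ (k + 1))
      = (ξ (k + 1)) ^ 2 * (1 - Real.sqrt (1 - ξ (k + 1))) ^ 2 * (1 - ξ (k + 1)) := by
    intro k
    rw [Pval, hroot (k+1), hsqrt k]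
  refine ⟨hPval, ?_, ?_⟩
  · -- ξ is antitone
    have hanti : Antitone ξ := by
      refine antitone_nat_of_succ_le fun k => ?_
      by_contra h
      push_neg at h
      have h1 : Phi (k+1) (ξ k) < Phi (k+1) (ξ (k+1)) := Phi_strict _ (hpos k).le h
      have h2 : (1:ℝ) ≤ Phi (k+1) (ξ k) := (hroot k) ▸ Phi_mono_k k (hpos k).le
      rw [hroot (k+1)] at h1
      linarith
    have hquarter : ∀ k, (1/4 : ℝ) < ξ k := by
      intro k
      by_contra h
      push_neg at h
      have := Phi_mono k (hpos k).le h
      rw [hroot k] at this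
      have := Phi_quarter k
      linarith
    have hbdd : BddBelow (Set.range ξ) := ⟨1/4, by rintro _ ⟨k, rfl⟩; exact (hquarter k).le⟩
    set L := ⨅ k, ξ k with hLdef
    have hL : Tendsto ξ atTop (nhds L) := tendsto_atTop_ciInf hanti hbdd
    have hL14 : (1/4 : ℝ) ≤ L := le_ciInf fun k => (hquarter k).le
    have hL0 : (0:ℝ) ≤ L := by linarith
    have hLle : ∀ k, L ≤ ξ k := fun k => ciInf_le hbdd k
    -- sequence a k = Phi k L
    set a := fun k => Phi k L with hadef
    have hamono : Monotone a := monotone_nat_of_le_succ fun k => Phi_mono_k k hL0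
    have habdd : BddAbove (Set.range a) := by
      refine ⟨1, ?_⟩
      rintro _ ⟨k, rfl⟩
      have := Phi_mono k hL0 (hLle k)
      rw [hroot k] at this
      exact this
    set A := ⨆ k, a k with hAdef
    have hA : Tendsto a atTop (nhds A) := tendsto_atTop_ciSup hamono habdd
    have hA' : Tendsto (fun k => a (k+1)) atTop (nhds A) :=
      hA.comp (tendsto_add_atTop_nat 1)
    have hA'' : Tendsto (fun k => L + (a k)^2) atTop (nhds (L + A^2)) :=
      tendsto_const_nhds.add (hA.pow 2)
    have hfix : A = L + A^2 := by
      refine tendsto_nhds_unique hA' ?_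
      convert hA'' using 1
      rfl
    have hLle14 : L ≤ 1/4 := by nlinarith [sq_nonneg (A - 1/2)]
    have hLeq : L = 1/4 := le_antisymm hLle14 hL14
    -- ξ (k+1) → 1/4
    have hx : Tendsto (fun k => ξ (k+1)) atTop (nhds (1/4 : ℝ)) := by
      rw [← hLeq]
      exact hL.comp (tendsto_add_atTop_nat 1)
    have hcont : Continuous fun x : ℝ => x ^ 2 * (1 - Real.sqrt (1 - x)) ^ 2 * (1 - x) := by
      fun_prop
    have hlim := (hcont.tendsto (1/4 : ℝ)).comp hx
    have hval : (1/4:ℝ) ^ 2 * (1 - Real.sqrt (1 - 1/4)) ^ 2 * (1 - 1/4)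
        = (3 / 64) * (1 - Real.sqrt 3 / 2) ^ 2 := by
      have h34 : Real.sqrt (1 - 1/4 : ℝ) = Real.sqrt 3 / 2 := by
        rw [show (1 - 1/4 : ℝ) = 3 / 4 by norm_num,
          Real.sqrt_div (by norm_num : (0:ℝ) ≤ 3) 4,
          show (4:ℝ) = 2^2 by norm_num, Real.sqrt_sq (by norm_num : (0:ℝ) ≤ 2)]
      rw [h34]; ring
    rw [← hval]
    refine Tendsto.congr (fun k => (hPval k).symm) ?_
    exact hlim
  · nlinarith [Real.sq_sqrt (by norm_num : (3:ℝ) ≥ 0), Real.sqrt_nonneg 3,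
      Real.sqrt_lt_sqrt (by norm_num : (0:ℝ) ≤ 3) (by norm_num : (3:ℝ) < (26/15)^2)]
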